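/- Let 0 ≤ i₁ < i₂ < i₃ < i₄ be natural numbers, J = {i₁,i₂,i₃,i₄}, and s ∈ ℕ. Then the following identities hold in ℤ[x]: (1) x^{2s}·D_J(x) = D_{{i₁+s, i₂+s, i₃+s, i₄+s}}(x); (2) if s ≥ 1, D_{{s·i₁, s·i₂, s·i₃, s·i₄}}(x) = s²·D_J(x^s); (3) for positive integers i < j < k, D_{{0,i,j,k}}(x) = i·k·x^i(x^{k−i}−1)(x^j−1) − i·j·x^i(x^{j−i}−1)(x^k−1) − j·k·x^j(x^{k−j}−1)(x^i−1); (4) for positive integers i < j < k, x^{i+j+k}·D_{{0,i,j,k}}(x^{−1}) = D_{{0,i,j,k}}(x), i.e. for every field F and every nonzero x ∈ F, x^{i+j+k}·D_{{0,i,j,k}}(x^{−1}) = D_{{0,i,j,k}}(x). -/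

import Mathlib

open Polynomial

universe u

/-- The 4×4 matrix `𝐌_J(x)` for `J = {a,b,c,d}` (columns in the given order),
whose column for exponent `i` is `(1, i, x^i, i·x^i)ᵀ`, and its determinant `D_J`. -/
noncomputable def Dfour (a b c d : ℕ) : Polynomial ℤ :=
  (Matrix.of fun r (j : Fin 4) =>
    ![(1 : Polynomial ℤ), ((![a,b,c,d] j : ℕ) : Polynomial ℤ),
      X ^ (![a,b,c,d] j), ((![a,b,c,d] j : ℕ) : Polynomial ℤ) * X ^ (![a,b,c,d] j)] r).det

lemma Dfour_eq (a b c d : ℕ) : Dfour a b c d =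
      - (c : Polynomial ℤ) * (d : Polynomial ℤ) * X ^ (b + d)
      + (c : Polynomial ℤ) * (d : Polynomial ℤ) * X ^ (b + c)
      + (c : Polynomial ℤ) * (d : Polynomial ℤ) * X ^ (a + d)
      - (c : Polynomial ℤ) * (d : Polynomial ℤ) * X ^ (a + c)
      + (b : Polynomial ℤ) * (d : Polynomial ℤ) * X ^ (c + d)
      - (b : Polynomial ℤ) * (d : Polynomial ℤ) * X ^ (b + c)
      - (b : Polynomial ℤ) * (d : Polynomial ℤ) * X ^ (a + d)
      + (b : Polynomial ℤ) * (d : Polynomial ℤ) * X ^ (a + b)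
      - (b : Polynomial ℤ) * (c : Polynomial ℤ) * X ^ (c + d)
      + (b : Polynomial ℤ) * (c : Polynomial ℤ) * X ^ (b + d)
      + (b : Polynomial ℤ) * (c : Polynomial ℤ) * X ^ (a + c)
      - (b : Polynomial ℤ) * (c : Polynomial ℤ) * X ^ (a + b)
      - (a : Polynomial ℤ) * (d : Polynomial ℤ) * X ^ (c + d)
      + (a : Polynomial ℤ) * (d : Polynomial ℤ) * X ^ (b + d)
      + (a : Polynomial ℤ) * (d : Polynomial ℤ) * X ^ (a + c)
      - (a : Polynomial ℤ) * (d : Polynomial ℤ) * X ^ (a + b)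
      + (a : Polynomial ℤ) * (c : Polynomial ℤ) * X ^ (c + d)
      - (a : Polynomial ℤ) * (c : Polynomial ℤ) * X ^ (b + c)
      - (a : Polynomial ℤ) * (c : Polynomial ℤ) * X ^ (a + d)
      + (a : Polynomial ℤ) * (c : Polynomial ℤ) * X ^ (a + b)
      - (a : Polynomial ℤ) * (b : Polynomial ℤ) * X ^ (b + d)
      + (a : Polynomial ℤ) * (b : Polynomial ℤ) * X ^ (b + c)
      + (a : Polynomial ℤ) * (b : Polynomial ℤ) * X ^ (a + d)
      - (a : Polynomial ℤ) * (b : Polynomial ℤ) * X ^ (a + c) := by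
  have hM : (Matrix.of fun r (j : Fin 4) =>
    ![(1 : Polynomial ℤ), ((![a,b,c,d] j : ℕ) : Polynomial ℤ),
      X ^ (![a,b,c,d] j), ((![a,b,c,d] j : ℕ) : Polynomial ℤ) * X ^ (![a,b,c,d] j)] r)
      = !![1, 1, 1, 1; (a:Polynomial ℤ), b, c, d; X^a, X^b, X^c, X^d;
           (a:Polynomial ℤ)*X^a, (b:Polynomial ℤ)*X^b, (c:Polynomial ℤ)*X^c, (d:Polynomial ℤ)*X^d] := by
    ext r j
    fin_cases r <;> fin_cases j <;> rfl
  rw [Dfour, hM, Matrix.det_succ_row_zero]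
  simp [Fin.sum_univ_succ, Matrix.det_fin_three, show (Fin.succAbove 1 1 : Fin 4) = 2 from rfl, show (Fin.succAbove 1 2 : Fin 4) = 3 from rfl, show (Fin.succAbove 2 1 : Fin 4) = 1 from rfl, show (Fin.succAbove 2 2 : Fin 4) = 3 from rfl, show (Fin.succAbove 3 1 : Fin 4) = 1 from rfl, show (Fin.succAbove 3 2 : Fin 4) = 2 from rfl, show (Fin.succAbove 1 0 : Fin 4) = 0 from rfl, show (Fin.succAbove 2 0 : Fin 4) = 0 from rfl, show (Fin.succAbove 3 0 : Fin 4) = 0 from rfl]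
  ring


lemma palin_aux {F : Type u} [Field F] (x : F) (hx : x ≠ 0) (i q r : ℕ) (ci cj ck : F) :
    x ^ (i + (i+q) + (i+q+r)) *
      ( ci*ck * x⁻¹^i * (x⁻¹^(q+r) - 1) * (x⁻¹^(i+q) - 1)
      - ci*cj * x⁻¹^i * (x⁻¹^q - 1) * (x⁻¹^(i+q+r) - 1)
      - cj*ck * x⁻¹^(i+q) * (x⁻¹^r - 1) * (x⁻¹^i - 1))
    = ci*ck * x^i * (x^(q+r) - 1) * (x^(i+q) - 1)
      - ci*cj * x^i * (x^q - 1) * (x^(i+q+r) - 1)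
      - cj*ck * x^(i+q) * (x^r - 1) * (x^i - 1) := by
  have key : ∀ n : ℕ, (x⁻¹:F)^n - 1 = (x⁻¹)^n * (1 - x^n) := by
    intro n
    rw [mul_sub, mul_one, ← mul_pow, inv_mul_cancel₀ hx, one_pow]
  have cancel : ∀ n : ℕ, (x:F)^n * x⁻¹^n = 1 := by
    intro n; rw [← mul_pow, mul_inv_cancel₀ hx, one_pow]
  simp only [key]
  have e : ∀ a b : ℕ, (x:F)^(a+b) = x^a * x^b := fun a b => pow_add x a b
  calc x ^ (i + (i+q) + (i+q+r)) *
      ( ci*ck * x⁻¹^i * (x⁻¹^(q+r) * (1 - x^(q+r))) * (x⁻¹^(i+q) * (1 - x^(i+q)))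
      - ci*cj * x⁻¹^i * (x⁻¹^q * (1 - x^q)) * (x⁻¹^(i+q+r) * (1 - x^(i+q+r)))
      - cj*ck * x⁻¹^(i+q) * (x⁻¹^r * (1 - x^r)) * (x⁻¹^i * (1 - x^i)))
      = (x^i * x⁻¹^i) * (x^(q+r) * x⁻¹^(q+r)) * (x^(i+q) * x⁻¹^(i+q)) * (x^i * (ci*ck * (1 - x^(q+r)) * (1 - x^(i+q))))
      - (x^i * x⁻¹^i) * (x^q * x⁻¹^q) * (x^(i+q+r) * x⁻¹^(i+q+r)) * (x^i * (ci*cj * (1 - x^q) * (1 - x^(i+q+r))))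
      - (x^(i+q) * x⁻¹^(i+q)) * (x^r * x⁻¹^r) * (x^i * x⁻¹^i) * (x^(i+q) * (cj*ck * (1 - x^r) * (1 - x^i))) := by
        simp only [e]; ring
    _ = _ := by simp only [cancel]; ring

set_option maxHeartbeats 2000000 in
/-- the identities of Lemma (i=0): translation, dilation, the explicit
formula for `D_{{0,i,j,k}}`, and the palindromic symmetry `x^{i+j+k} D(x⁻¹) = D(x)`. -/
theorem Dfour_identities (i₁ i₂ i₃ i₄ s i j k : ℕ)
    (h₁₂ : i₁ < i₂) (h₂₃ : i₂ < i₃) (h₃₄ : i₃ < i₄)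
    (hi : 0 < i) (hij : i < j) (hjk : j < k) :
    (X : Polynomial ℤ) ^ (2 * s) * Dfour i₁ i₂ i₃ i₄
        = Dfour (i₁ + s) (i₂ + s) (i₃ + s) (i₄ + s) ∧
    (1 ≤ s → Dfour (s * i₁) (s * i₂) (s * i₃) (s * i₄)
        = C ((s : ℤ) ^ 2) * (Dfour i₁ i₂ i₃ i₄).comp (X ^ s)) ∧
    (Dfour 0 i j k
        = C ((i : ℤ) * (k : ℤ)) * X ^ i * (X ^ (k - i) - 1) * (X ^ j - 1)
          - C ((i : ℤ) * (j : ℤ)) * X ^ i * (X ^ (j - i) - 1) * (X ^ k - 1)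
          - C ((j : ℤ) * (k : ℤ)) * X ^ j * (X ^ (k - j) - 1) * (X ^ i - 1)) ∧
    (∀ (F : Type u) [Field F] (x : F), x ≠ 0 →
        x ^ (i + j + k) * (Polynomial.aeval x⁻¹ (Dfour 0 i j k))
          = Polynomial.aeval x (Dfour 0 i j k)) := by
  obtain ⟨q, rfl⟩ : ∃ q, j = i + q := ⟨j - i, by omega⟩
  obtain ⟨r, rfl⟩ : ∃ r, k = i + q + r := ⟨k - (i + q), by omega⟩
  have e1 : i + q + r - i = q + r := by omega
  have e2 : i + q - i = q := by omega
  have e3 : i + q + r - (i + q) = r := by omega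
  have h3 : Dfour 0 i (i + q) (i + q + r)
        = C ((i : ℤ) * ((i + q + r : ℕ) : ℤ)) * X ^ i * (X ^ (i + q + r - i) - 1) * (X ^ (i + q) - 1)
          - C ((i : ℤ) * ((i + q : ℕ) : ℤ)) * X ^ i * (X ^ (i + q - i) - 1) * (X ^ (i + q + r) - 1)
          - C (((i + q : ℕ) : ℤ) * ((i + q + r : ℕ) : ℤ)) * X ^ (i + q) * (X ^ (i + q + r - (i + q)) - 1) * (X ^ i - 1) := by
    rw [e1, e2, e3, Dfour_eq]
    simp only [map_mul, map_natCast]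
    push_cast
    ring
  refine ⟨?_, fun _ => ?_, h3, ?_⟩
  · rw [Dfour_eq, Dfour_eq]
    push_cast
    ring
  · rw [Dfour_eq, Dfour_eq]
    simp only [add_comp, sub_comp, neg_comp, mul_comp, natCast_comp, pow_comp, X_comp,
      map_pow, map_natCast]
    push_cast
    ring
  · intro F _ x hx
    rw [h3, e1, e2, e3]
    simp only [map_sub, map_mul, map_pow, map_one, aeval_X, aeval_C, map_natCast]
    exact palin_aux x hx i q r (i : F) ((i + q : ℕ) : F) ((i + q + r : ℕ) : F)
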